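/- An LD-resolvent of a simply moded query and a simply moded clause that is variable-disjoint with it is simply moded. Precisely: let A, Ā be a simply moded query with leftmost atom A, let H ← B̄ be a simply moded clause sharing no variables with the query, and let θ be a most general unifier of A and H; then the LD-resolvent (B̄, Ā)θ is a simply moded query. -/

import Mathlib

/-- First-order terms over function symbols `F` and variables `V`. -/
inductive Term (F V : Type) : Type where
  | var : V → Term F V
  | fn  : F → List (Term F V) → Term F V

namespace Term

/-- `VarIn v t` holds iff the variable `v` occurs in the term `t`. -/
inductive VarIn {F V : Type} : V → Term F V → Prop where
  | var (v : V) : VarIn v (.var v)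
  | fn {v : V} (f : F) {args : List (Term F V)} {t : Term F V} :
      t ∈ args → VarIn v t → VarIn v (.fn f args)

/-- Application of a substitution (a map from variables to terms) to a term. -/
def subst {F V : Type} (σ : V → Term F V) : Term F V → Term F V
  | .var v => σ v
  | .fn f args => .fn f (args.attach.map fun t => subst σ t.1)
termination_by t => sizeOf t
decreasing_by
  have := List.sizeOf_lt_of_mem t.2
  simp only [Term.fn.sizeOf_spec]
  omega

end Term

/-- The set of variables occurring in a list (tuple) of terms. -/
def varsOf {F V : Type} (ts : List (Term F V)) : Set V :=
  {v | ∃ t ∈ ts, Term.VarIn v t}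

/-- An atom `p(s̄, t̄)`: a relation symbol together with the tuple of terms
filling its input positions and the tuple filling its output positions. -/
structure Atom (P F V : Type) where
  pred : P
  inputs : List (Term F V)
  outputs : List (Term F V)

/-- Application of a substitution to an atom. -/
def Atom.subst {P F V : Type} (σ : V → Term F V) (A : Atom P F V) : Atom P F V :=
  ⟨A.pred, A.inputs.map (Term.subst σ), A.outputs.map (Term.subst σ)⟩

/-- The set of variables occurring in an atom. -/
def Atom.vars {P F V : Type} (A : Atom P F V) : Set V :=
  varsOf A.inputs ∪ varsOf A.outputs

/-- The set of variables occurring in a query (a list of atoms). -/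
def queryVars {P F V : Type} (Q : List (Atom P F V)) : Set V :=
  {v | ∃ a ∈ Q, v ∈ a.vars}

/-- A query `p_1(s̄_1,t̄_1), …, p_n(s̄_n,t̄_n)` is well-moded iff for every `i`,
`Var(s̄_i) ⊆ ⋃_{j=1}^{i-1} Var(t̄_j)`. -/
def WellModedQuery {P F V : Type} (Q : List (Atom P F V)) : Prop :=
  ∀ i (h : i < Q.length),
    varsOf (Q.get ⟨i, h⟩).inputs ⊆ varsOf (((Q.take i).map Atom.outputs).flatten)

/-- A clause `p_0(t̄_0, s̄_{n+1}) ← p_1(s̄_1,t̄_1), …, p_n(s̄_n,t̄_n)` (with head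
input tuple `t̄_0 = head.inputs` and head output tuple `s̄_{n+1} = head.outputs`)
is well-moded iff for every `i ∈ [1, n+1]`, `Var(s̄_i) ⊆ ⋃_{j=0}^{i-1} Var(t̄_j)`. -/
def WellModedClause {P F V : Type} (head : Atom P F V) (body : List (Atom P F V)) : Prop :=
  (∀ i (h : i < body.length),
    varsOf (body.get ⟨i, h⟩).inputs ⊆
      varsOf (head.inputs ++ ((body.take i).map Atom.outputs).flatten)) ∧
  varsOf head.outputs ⊆ varsOf (head.inputs ++ (body.map Atom.outputs).flatten)

/-- Composition of substitutions: first apply `θ`, then `τ`. -/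
def Subst.comp {F V : Type} (θ τ : V → Term F V) : V → Term F V :=
  fun v => (θ v).subst τ

/-- `θ` is a unifier of the atoms `A` and `H` iff `Aθ = Hθ`. -/
def IsUnifier {P F V : Type} (θ : V → Term F V) (A H : Atom P F V) : Prop :=
  A.subst θ = H.subst θ

/-- `θ` is a most general unifier of `A` and `H` iff it is a unifier and every
unifier of `A` and `H` factors through it. -/
def IsMGU {P F V : Type} (θ : V → Term F V) (A H : Atom P F V) : Prop :=
  IsUnifier θ A H ∧ ∀ σ : V → Term F V, IsUnifier σ A H → ∃ τ : V → Term F V,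
    ∀ v, σ v = (θ v).subst τ

/-- A clause `p_0(s̄_0, t̄_{n+1}) ← p_1(s̄_1,t̄_1), …, p_n(s̄_n,t̄_n)` (with head
input tuple `s̄_0 = head.inputs`) is simply moded iff `t̄_1, …, t̄_n` is a linear
family of variables (every term in the body output tuples is a variable, and
each such variable occurs exactly once among them) and for every `i ∈ [1, n]`,
`Var(t̄_i) ∩ ⋃_{j=0}^{i} Var(s̄_j) = ∅`. -/
def SimplyModedClause {P F V : Type} (head : Atom P F V) (body : List (Atom P F V)) : Prop :=
  (∀ t ∈ (body.map Atom.outputs).flatten, ∃ v : V, t = Term.var v) ∧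
  ((body.map Atom.outputs).flatten).Nodup ∧
  ∀ i (h : i < body.length),
    varsOf (body.get ⟨i, h⟩).outputs ∩
      varsOf (head.inputs ++ ((body.take (i + 1)).map Atom.inputs).flatten) = ∅

/-- A query is simply moded iff the clause `q ← Ā` with a dummy zero-arity head is. -/
def SimplyModedQuery {P F V : Type} (Q : List (Atom P F V)) : Prop :=
  (∀ t ∈ (Q.map Atom.outputs).flatten, ∃ v : V, t = Term.var v) ∧
  ((Q.map Atom.outputs).flatten).Nodup ∧
  ∀ i (h : i < Q.length),
    varsOf (Q.get ⟨i, h⟩).outputs ∩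
      varsOf (((Q.take (i + 1)).map Atom.inputs).flatten) = ∅


section Helpers

variable {P F V : Type}

@[simp] lemma Term.subst_var (σ : V → Term F V) (v : V) :
    (Term.var v).subst σ = σ v := by rw [Term.subst]

@[simp] lemma Term.subst_fn (σ : V → Term F V) (f : F) (args : List (Term F V)) :
    (Term.fn f args).subst σ = Term.fn f (args.map (Term.subst σ)) := by
  rw [Term.subst]
  congr 1
  simp [List.attach_map_val]

lemma Term.varIn_subst_iff {σ : V → Term F V} {w : V} :
    ∀ {t : Term F V}, Term.VarIn w (t.subst σ) ↔ ∃ y, Term.VarIn y t ∧ Term.VarIn w (σ y) := by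
  intro t
  induction t using Term.subst.induct with
  | case1 v =>
    simp only [Term.subst_var]
    constructor
    · intro h; exact ⟨v, .var v, h⟩
    · rintro ⟨y, hy, hw⟩; cases hy; exact hw
  | case2 f args ih =>
    simp only [Term.subst_fn]
    constructor
    · rintro (_ | ⟨_, hmem, hin⟩)
      rcases List.mem_map.1 hmem with ⟨t, ht, rfl⟩
      rcases (ih ⟨t, ht⟩).1 hin with ⟨y, hy, hw⟩
      exact ⟨y, .fn f ht hy, hw⟩
    · rintro ⟨y, hy, hw⟩
      rcases hy with _ | ⟨_, hmem, hin⟩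
      exact .fn f (List.mem_map_of_mem hmem) ((ih ⟨_, hmem⟩).2 ⟨y, hin, hw⟩)

lemma Term.subst_subst (σ τ : V → Term F V) :
    ∀ (t : Term F V), (t.subst σ).subst τ = t.subst (fun v => (σ v).subst τ) := by
  intro t
  induction t using Term.subst.induct with
  | case1 v => simp
  | case2 f args ih =>
    simp only [Term.subst_fn, List.map_map]
    congr 1
    refine List.map_congr_left ?_
    intro t ht
    exact ih ⟨t, ht⟩

lemma Term.subst_congr {σ τ : V → Term F V} :
    ∀ {t : Term F V}, (∀ v, Term.VarIn v t → σ v = τ v) → t.subst σ = t.subst τ := by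
  intro t
  induction t using Term.subst.induct with
  | case1 v => intro h; simpa using h v (.var v)
  | case2 f args ih =>
    intro h
    simp only [Term.subst_fn]
    congr 1
    refine List.map_congr_left ?_
    intro t ht
    exact ih ⟨t, ht⟩ (fun v hv => h v (.fn f ht hv))

end Helpers

section Helpers2

variable {P F V : Type} {α β : Type}

lemma mem_flatten_map_iff (f : α → List β) (l : List α) (b : β) :
    b ∈ (l.map f).flatten ↔ ∃ i, ∃ h : i < l.length, b ∈ f l[i] := by
  rw [List.mem_flatten]
  constructor
  · rintro ⟨L, hL, hb⟩
    rcases List.mem_map.1 hL with ⟨a, ha, rfl⟩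
    rcases List.mem_iff_getElem.1 ha with ⟨i, hi, rfl⟩
    exact ⟨i, hi, hb⟩
  · rintro ⟨i, h, hb⟩
    exact ⟨f l[i], List.mem_map_of_mem (l.getElem_mem h), hb⟩

lemma mem_take_flatten_map_iff (f : α → List β) (l : List α) (n : ℕ) (b : β) :
    b ∈ ((l.take n).map f).flatten ↔ ∃ i, ∃ h : i < l.length, i < n ∧ b ∈ f l[i] := by
  rw [mem_flatten_map_iff]
  constructor
  · rintro ⟨i, h, hb⟩
    have hi : i < l.length := lt_of_lt_of_le h (by simp [List.length_take])
    have hn : i < n := lt_of_lt_of_le h (by simp [List.length_take])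
    refine ⟨i, hi, hn, ?_⟩
    rwa [List.getElem_take] at hb
  · rintro ⟨i, hi, hn, hb⟩
    have h : i < (l.take n).length := by simp [List.length_take]; omega
    exact ⟨i, h, by rwa [List.getElem_take]⟩

lemma mem_varsOf_iff {ts : List (Term F V)} {v : V} :
    v ∈ varsOf ts ↔ ∃ t ∈ ts, Term.VarIn v t := Iff.rfl

lemma varsOf_append (l₁ l₂ : List (Term F V)) :
    varsOf (l₁ ++ l₂) = varsOf l₁ ∪ varsOf l₂ := by
  ext v
  simp [mem_varsOf_iff, Set.mem_union, or_and_right, exists_or, List.mem_append]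

@[simp] lemma Atom.inputs_subst (σ : V → Term F V) (a : Atom P F V) :
    (a.subst σ).inputs = a.inputs.map (Term.subst σ) := rfl

@[simp] lemma Atom.outputs_subst (σ : V → Term F V) (a : Atom P F V) :
    (a.subst σ).outputs = a.outputs.map (Term.subst σ) := rfl

end Helpers2

section MainHelpers

variable {P F V : Type}

lemma mem_queryVars_of_mem {Q : List (Atom P F V)} {a : Atom P F V} {v : V}
    (ha : a ∈ Q) (hv : v ∈ a.vars) : v ∈ queryVars Q := ⟨a, ha, hv⟩

lemma outputs_vars_mem {a : Atom P F V} {w : V} (h : Term.var w ∈ a.outputs) :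
    w ∈ a.vars := Or.inr ⟨Term.var w, h, .var w⟩

lemma inputs_vars_mem {a : Atom P F V} {w : V} (h : w ∈ varsOf a.inputs) :
    w ∈ a.vars := Or.inl h

end MainHelpers


/-- An LD-resolvent of a simply moded query and a simply moded clause that is
variable-disjoint with it is simply moded: if `A :: Abar` is a simply moded
query with leftmost atom `A`, `H ← Bbar` is a simply moded clause sharing no
variables with the query, and `θ` is a most general unifier of `A` and `H`,
then the LD-resolvent `(Bbar ++ Abar)θ` is a simply moded query. -/
theorem ld_resolvent_simply_moded
    {P F V : Type} (A : Atom P F V) (Abar : List (Atom P F V))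
    (H : Atom P F V) (Bbar : List (Atom P F V)) (θ : V → Term F V)
    (hquery : SimplyModedQuery (A :: Abar))
    (hclause : SimplyModedClause H Bbar)
    (hdisj : Disjoint (queryVars (A :: Abar)) (H.vars ∪ queryVars Bbar))
    (hmgu : IsMGU θ A H) :
    SimplyModedQuery ((Bbar ++ Abar).map (Atom.subst θ)) := by
  classical
  obtain ⟨hqvars, hqnodup, hqsm⟩ := hquery
  obtain ⟨hcvars, hcnodup, hcsm⟩ := hclause
  obtain ⟨hunif, hfactor⟩ := hmgu
  -- components of the unifier equation
  obtain ⟨hpred, hinθ, houtθ⟩ : A.pred = H.pred ∧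
      A.inputs.map (Term.subst θ) = H.inputs.map (Term.subst θ) ∧
      A.outputs.map (Term.subst θ) = H.outputs.map (Term.subst θ) := by
    have h' : A.subst θ = H.subst θ := hunif
    simpa [Atom.subst, Atom.mk.injEq] using h'
  have hlen : A.outputs.length = H.outputs.length := by
    have := congrArg List.length houtθ; simpa using this
  -- disjointness in pointwise form
  have hdisj' : ∀ v : V, v ∈ queryVars (A :: Abar) →
      (v ∈ H.vars ∨ v ∈ queryVars Bbar) → False := by
    intro v h1 h2
    exact Set.disjoint_left.mp hdisj h1 (by rcases h2 with h | h; exact Or.inl h; exact Or.inr h)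
  -- nodup decomposition of query outputs
  have hqnodup' : (A.outputs ++ (Abar.map Atom.outputs).flatten).Nodup := by
    simpa using hqnodup
  rw [List.nodup_append] at hqnodup'
  obtain ⟨htbarnodup, hAoutnodup, hdisAB⟩ := hqnodup'
  have htbarvar : ∀ t ∈ A.outputs, ∃ v, t = Term.var v := by
    intro t ht; exact hqvars t (by simp [ht])
  have hAoutvar : ∀ t ∈ (Abar.map Atom.outputs).flatten, ∃ v, t = Term.var v := by
    intro t ht; exact hqvars t (by simp [List.mem_flatten] at ht ⊢; tauto)
  set WL : List (Term F V) :=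
    (Bbar.map Atom.outputs).flatten ++ (Abar.map Atom.outputs).flatten with hWLdef
  have hWLvar : ∀ t ∈ WL, ∃ v, t = Term.var v := by
    intro t ht
    rcases List.mem_append.1 ht with h | h
    · exact hcvars t h
    · exact hAoutvar t h
  -- facts about variables in WL
  have hWLfact : ∀ w, Term.var w ∈ WL →
      w ∉ varsOf A.inputs ∧ w ∉ varsOf H.inputs ∧ Term.var w ∉ A.outputs := by
    intro w hw
    rcases List.mem_append.1 hw with h | h
    · -- w is an output variable of Bbar
      obtain ⟨i, hi, hmem⟩ := (mem_flatten_map_iff Atom.outputs Bbar _).1 h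
      have hwout : w ∈ varsOf Bbar[i].outputs := ⟨Term.var w, hmem, .var w⟩
      have hwqB : w ∈ queryVars Bbar :=
        mem_queryVars_of_mem (Bbar.getElem_mem hi) (outputs_vars_mem hmem)
      refine ⟨?_, ?_, ?_⟩
      · intro hwin
        exact hdisj' w (mem_queryVars_of_mem (List.mem_cons_self) (Or.inl hwin))
          (Or.inr hwqB)
      · intro hwin
        have := hcsm i hi
        have hmem2 : w ∈ varsOf Bbar[i].outputs ∩
            varsOf (H.inputs ++ ((Bbar.take (i + 1)).map Atom.inputs).flatten) := by
          refine ⟨by simpa using hwout, ?_⟩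
          rw [varsOf_append]
          exact Or.inl hwin
        rw [show (Bbar.get ⟨i, hi⟩) = Bbar[i] from rfl] at this
        rw [this] at hmem2
        exact hmem2
      · intro hvw
        exact hdisj' w (mem_queryVars_of_mem (List.mem_cons_self) (outputs_vars_mem hvw))
          (Or.inr hwqB)
    · -- w is an output variable of Abar
      obtain ⟨i', hi', hmem⟩ := (mem_flatten_map_iff Atom.outputs Abar _).1 h
      have hwqA : w ∈ queryVars (A :: Abar) :=
        mem_queryVars_of_mem (List.mem_cons_of_mem A (Abar.getElem_mem hi'))
          (outputs_vars_mem hmem)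
      refine ⟨?_, ?_, ?_⟩
      · intro hwin
        have hic : i' + 1 < (A :: Abar).length := by simp; omega
        have := hqsm (i' + 1) hic
        have hmem2 : w ∈ varsOf ((A :: Abar).get ⟨i' + 1, hic⟩).outputs ∩
            varsOf ((((A :: Abar).take (i' + 1 + 1)).map Atom.inputs).flatten) := by
          constructor
          · show w ∈ varsOf Abar[i'].outputs
            exact ⟨Term.var w, hmem, .var w⟩
          · refine (mem_varsOf_iff).2 ?_
            obtain ⟨s, hs, hsv⟩ := hwin
            refine ⟨s, ?_, hsv⟩
            refine (mem_take_flatten_map_iff Atom.inputs (A :: Abar) (i' + 2) s).2 ?_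
            exact ⟨0, by simp, by omega, hs⟩
        rw [this] at hmem2
        exact hmem2
      · intro hwin
        exact hdisj' w hwqA (Or.inl (Or.inl hwin))
      · intro hvw
        exact hdisAB _ hvw _ h rfl
  -- facts about variables of A.outputs
  have hTB : ∀ y, Term.var y ∈ A.outputs →
      y ∉ varsOf A.inputs ∧ y ∉ varsOf H.inputs ∧ y ∉ varsOf H.outputs := by
    intro y hy
    have hyq : y ∈ queryVars (A :: Abar) :=
      mem_queryVars_of_mem (List.mem_cons_self) (outputs_vars_mem hy)
    refine ⟨?_, ?_, ?_⟩
    · intro hyin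
      have h0 : 0 < (A :: Abar).length := by simp
      have := hqsm 0 h0
      have hmem2 : y ∈ varsOf ((A :: Abar).get ⟨0, h0⟩).outputs ∩
          varsOf ((((A :: Abar).take 1).map Atom.inputs).flatten) := by
        refine ⟨⟨Term.var y, hy, .var y⟩, ?_⟩
        obtain ⟨s, hs, hsv⟩ := hyin
        exact ⟨s, (mem_take_flatten_map_iff Atom.inputs (A :: Abar) 1 s).2
          ⟨0, by simp, by omega, hs⟩, hsv⟩
      rw [this] at hmem2
      exact hmem2
    · intro hyin
      exact hdisj' y hyq (Or.inl (Or.inl hyin))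
    · intro hyin
      exact hdisj' y hyq (Or.inl (Or.inr hyin))
  -- a substitution ρ wiping out `WL`-variables from the range of θ, where needed
  obtain ⟨ρ, hρ⟩ : ∃ ρ : V → Term F V, ∀ x : V,
      (x ∈ varsOf A.inputs ∨ x ∈ varsOf H.inputs ∨ Term.var x ∈ A.outputs) →
      ∀ w, Term.var w ∈ WL → ¬ Term.VarIn w ((θ x).subst ρ) := by
    by_cases hex : ∃ u : V, Term.var u ∉ WL
    · obtain ⟨u, hu⟩ := hex
      refine ⟨fun y => if Term.var y ∈ WL then Term.var u else Term.var y, ?_⟩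
      intro x _ w hw hvi
      rcases Term.varIn_subst_iff.1 hvi with ⟨y, _, hwy⟩
      by_cases hy : Term.var y ∈ WL
      · rw [if_pos hy] at hwy; cases hwy; exact hu hw
      · rw [if_neg hy] at hwy; cases hwy; exact hy hw
    · push_neg at hex
      refine ⟨Term.var, ?_⟩
      intro x hx w hw _
      rcases hx with hx | hx | hx
      · exact (hWLfact x (hex x)).1 hx
      · exact (hWLfact x (hex x)).2.1 hx
      · exact (hWLfact x (hex x)).2.2 hx
  -- the tailored unifier θ₀
  obtain ⟨θ₀, hθ₀unif, hθ₀W, hθ₀key⟩ : ∃ θ₀ : V → Term F V,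
      IsUnifier θ₀ A H ∧
      (∀ w, Term.var w ∈ WL → θ₀ w = Term.var w) ∧
      (∀ w, Term.var w ∈ WL → ∀ y, Term.VarIn w (θ₀ y) →
        y = w ∨ (Term.var y ∈ A.outputs ∧ w ∈ varsOf H.outputs)) := by
    set θ₂ : V → Term F V := fun y =>
      if y ∈ varsOf A.inputs ∨ y ∈ varsOf H.inputs then (θ y).subst ρ
      else Term.var y with hθ₂
    have hθ₂W : ∀ w y, Term.var w ∈ WL → Term.VarIn w (θ₂ y) → y = w := by
      intro w y hw hvi
      rw [hθ₂] at hvi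
      simp only at hvi
      by_cases hy : y ∈ varsOf A.inputs ∨ y ∈ varsOf H.inputs
      · rw [if_pos hy] at hvi
        exact absurd hvi (hρ y (by tauto) w hw)
      · rw [if_neg hy] at hvi
        cases hvi; rfl
    set θ₀' : V → Term F V := fun y =>
      if Term.var y ∈ A.outputs then
        (H.outputs.getD (A.outputs.idxOf (Term.var y)) (Term.var y)).subst θ₂
      else θ₂ y with hθ₀'
    have hθ₀'B : ∀ y, (y ∈ varsOf A.inputs ∨ y ∈ varsOf H.inputs) →
        θ₀' y = (θ y).subst ρ := by
      intro y hy
      have hyt : Term.var y ∉ A.outputs := by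
        intro hc
        rcases hy with hy | hy
        · exact (hTB y hc).1 hy
        · exact (hTB y hc).2.1 hy
      rw [hθ₀']
      simp only
      rw [if_neg hyt, hθ₂]
      simp only
      rw [if_pos hy]
    have hlmap : ∀ l : List (Term F V),
        (∀ v ∈ varsOf l, v ∈ varsOf A.inputs ∨ v ∈ varsOf H.inputs) →
        l.map (Term.subst θ₀') = (l.map (Term.subst θ)).map (Term.subst ρ) := by
      intro l hl
      rw [List.map_map]
      refine List.map_congr_left ?_
      intro s hs
      have : s.subst θ₀' = s.subst (fun v => (θ v).subst ρ) := by
        refine Term.subst_congr ?_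
        intro v hv
        exact hθ₀'B v (hl v ⟨s, hs, hv⟩)
      rw [this, ← Term.subst_subst]
      rfl
    refine ⟨θ₀', ?_, ?_, ?_⟩
    · -- θ₀' unifies A and H
      show A.subst θ₀' = H.subst θ₀'
      have hins : A.inputs.map (Term.subst θ₀') = H.inputs.map (Term.subst θ₀') := by
        rw [hlmap A.inputs (fun v hv => Or.inl hv), hlmap H.inputs (fun v hv => Or.inr hv),
          hinθ]
      have hHout : H.outputs.map (Term.subst θ₀') = H.outputs.map (Term.subst θ₂) := by
        refine List.map_congr_left ?_
        intro s hs
        refine Term.subst_congr ?_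
        intro v hv
        have hvt : Term.var v ∉ A.outputs := by
          intro hc
          exact (hTB v hc).2.2 ⟨s, hs, hv⟩
        rw [hθ₀']
        simp only
        rw [if_neg hvt]
      have hAout : A.outputs.map (Term.subst θ₀') = H.outputs.map (Term.subst θ₂) := by
        refine List.ext_getElem (by simp [hlen]) ?_
        intro k hk1 hk2
        have hk1' : k < A.outputs.length := by simpa using hk1
        have hk2' : k < H.outputs.length := by simpa using hk2
        obtain ⟨y, hy⟩ := htbarvar A.outputs[k] (A.outputs.getElem_mem hk1')
        have hyt : Term.var y ∈ A.outputs := hy ▸ A.outputs.getElem_mem hk1'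
        simp only [List.getElem_map]
        rw [hy, Term.subst_var, hθ₀']
        simp only
        rw [if_pos hyt, ← hy, htbarnodup.idxOf_getElem _ _,
          List.getD_eq_getElem _ _ (by omega : k < H.outputs.length)]
      show Atom.mk _ _ _ = Atom.mk _ _ _
      rw [Atom.mk.injEq]
      exact ⟨hpred, hins, hAout.trans hHout.symm⟩
    · -- θ₀' fixes the output variables of Bbar and Abar
      intro w hw
      rw [hθ₀']
      simp only
      rw [if_neg (hWLfact w hw).2.2, hθ₂]
      simp only
      rw [if_neg]
      push_neg
      exact ⟨(hWLfact w hw).1, (hWLfact w hw).2.1⟩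
    · -- occurrences of WL-variables in the range of θ₀'
      intro w hw y hvi
      rw [hθ₀'] at hvi
      simp only at hvi
      by_cases hyt : Term.var y ∈ A.outputs
      · rw [if_pos hyt] at hvi
        rcases Term.varIn_subst_iff.1 hvi with ⟨z, hz, hwz⟩
        have hzw : z = w := hθ₂W w z hw hwz
        subst hzw
        by_cases hk : A.outputs.idxOf (Term.var y) < H.outputs.length
        · rw [List.getD_eq_getElem _ _ hk] at hz
          exact Or.inr ⟨hyt, ⟨_, H.outputs.getElem_mem hk, hz⟩⟩
        · rw [List.getD_eq_default _ _ (by omega)] at hz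
          cases hz
          exact Or.inl rfl
      · rw [if_neg hyt] at hvi
        exact Or.inl (hθ₂W w y hw hvi)
  -- factor θ₀ through the mgu θ
  obtain ⟨τ, hτ⟩ := hfactor θ₀ hθ₀unif
  have hgex : ∀ w, Term.var w ∈ WL → ∃ y, θ w = Term.var y ∧ τ y = Term.var w := by
    intro w hw
    have h : (θ w).subst τ = Term.var w := (hτ w).symm.trans (hθ₀W w hw)
    cases hθw : θ w with
    | var y =>
      refine ⟨y, rfl, ?_⟩
      rw [hθw, Term.subst_var] at h
      exact h
    | fn f l =>
      rw [hθw, Term.subst_fn] at h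
      cases h
  choose g hg1 hg2 using hgex
  have hginj : ∀ w1 hw1 w2 hw2, g w1 hw1 = g w2 hw2 → w1 = w2 := by
    intro w1 hw1 w2 hw2 hg
    have h1 := hg2 w1 hw1
    rw [hg] at h1
    rw [hg2 w2 hw2] at h1
    exact Term.var.inj h1.symm
  have hθ₀fun : θ₀ = fun v => (θ v).subst τ := funext hτ
  -- the key non-occurrence property
  have hkey : ∀ w (hw : Term.var w ∈ WL), ∀ s : Term F V, ¬ Term.VarIn w s →
      ((∀ y, Term.VarIn y s → Term.var y ∉ A.outputs) ∨ w ∉ varsOf H.outputs) →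
      ¬ Term.VarIn (g w hw) (s.subst θ) := by
    intro w hw s hws hside hvi
    have h1 : Term.VarIn w ((s.subst θ).subst τ) :=
      Term.varIn_subst_iff.2 ⟨g w hw, hvi, by rw [hg2 w hw]; exact .var w⟩
    rw [Term.subst_subst, ← hθ₀fun] at h1
    rcases Term.varIn_subst_iff.1 h1 with ⟨y, hy, hwy⟩
    rcases hθ₀key w hw y hwy with rfl | ⟨hyt, hwv⟩
    · exact hws hy
    · rcases hside with hL | hR
      · exact hL y hy hyt
      · exact hR hwv
  -- rewriting the resolvent's outputs and inputs
  have hQout : (((Bbar ++ Abar).map (Atom.subst θ)).map Atom.outputs).flatten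
      = WL.map (Term.subst θ) := by
    rw [hWLdef]
    simp [List.map_map, Function.comp_def]
  have hQin : ∀ n : ℕ, ((((Bbar ++ Abar).map (Atom.subst θ)).take n).map Atom.inputs).flatten
      = ((((Bbar ++ Abar).take n).map Atom.inputs).flatten).map (Term.subst θ) := by
    intro n
    rw [← List.map_take]
    simp [List.map_map, Function.comp_def]
  refine ⟨?_, ?_, ?_⟩
  · -- all outputs of the resolvent are variables
    intro t ht
    rw [hQout] at ht
    rcases List.mem_map.1 ht with ⟨t0, ht0, rfl⟩
    obtain ⟨w, rfl⟩ := hWLvar t0 ht0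
    exact ⟨g w ht0, by rw [Term.subst_var, hg1 w ht0]⟩
  · -- the outputs of the resolvent are linear
    rw [hQout]
    have hWLnodup : WL.Nodup := by
      rw [hWLdef, List.nodup_append]
      refine ⟨hcnodup, hAoutnodup, ?_⟩
      intro t htB t' htA htt
      subst htt
      obtain ⟨w, rfl⟩ := hcvars t htB
      obtain ⟨i, hi, hm⟩ := (mem_flatten_map_iff Atom.outputs Bbar _).1 htB
      obtain ⟨i', hi', hm'⟩ := (mem_flatten_map_iff Atom.outputs Abar _).1 htA
      exact hdisj' w
        (mem_queryVars_of_mem (List.mem_cons_of_mem A (Abar.getElem_mem hi'))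
          (outputs_vars_mem hm'))
        (Or.inr (mem_queryVars_of_mem (Bbar.getElem_mem hi) (outputs_vars_mem hm)))
    refine hWLnodup.map_on ?_
    intro x hx y hy hxy
    obtain ⟨w1, rfl⟩ := hWLvar x hx
    obtain ⟨w2, rfl⟩ := hWLvar y hy
    rw [Term.subst_var, Term.subst_var, hg1 w1 hx, hg1 w2 hy] at hxy
    exact congrArg Term.var (hginj w1 hx w2 hy (Term.var.inj hxy))
  · -- the simply-modedness output/input disjointness conditions
    intro i h
    have hi : i < Bbar.length + Abar.length := by simpa using h
    ext v
    simp only [Set.mem_inter_iff, Set.mem_empty_iff_false, iff_false]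
    rintro ⟨hvout, hvin⟩
    -- analyze the output membership
    simp only [List.get_eq_getElem, List.getElem_map, Atom.subst] at hvout
    obtain ⟨t1, ht1, hvt⟩ := hvout
    rcases List.mem_map.1 ht1 with ⟨t0, ht0, rfl⟩
    have hwWL : t0 ∈ WL := by
      rw [hWLdef]
      have := (mem_flatten_map_iff Atom.outputs (Bbar ++ Abar) t0).2 ⟨i, (by simpa using hi), ht0⟩
      simpa using this
    obtain ⟨w, rfl⟩ := hWLvar t0 hwWL
    rw [Term.subst_var, hg1 w hwWL] at hvt
    cases hvt
    -- analyze the input membership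
    rw [hQin] at hvin
    obtain ⟨s1, hs1, hvs⟩ := hvin
    rcases List.mem_map.1 hs1 with ⟨s, hs, rfl⟩
    obtain ⟨j, hj, hjle, hsmem⟩ := (mem_take_flatten_map_iff Atom.inputs (Bbar ++ Abar) (i + 1) s).1 hs
    refine hkey w hwWL s ?_ ?_ hvs
    all_goals clear hvs hs hs1 ht1
    · -- w does not occur in s
      intro hc
      by_cases hiB : i < Bbar.length
      · have hjB : j < Bbar.length := by omega
        rw [List.getElem_append_left hiB] at ht0
        rw [List.getElem_append_left hjB] at hsmem
        have := hcsm i hiB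
        have hmem2 : w ∈ varsOf (Bbar.get ⟨i, hiB⟩).outputs ∩
            varsOf (H.inputs ++ ((Bbar.take (i + 1)).map Atom.inputs).flatten) := by
          refine ⟨⟨Term.var w, ht0, .var w⟩, ?_⟩
          rw [varsOf_append]
          refine Or.inr ⟨s, ?_, hc⟩
          exact (mem_take_flatten_map_iff Atom.inputs Bbar (i + 1) s).2 ⟨j, hjB, by omega, hsmem⟩
        rw [this] at hmem2
        exact hmem2
      · have hiB' : Bbar.length ≤ i := by omega
        rw [List.getElem_append_right hiB'] at ht0
        have hwqA : w ∈ queryVars (A :: Abar) :=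
          mem_queryVars_of_mem
            (List.mem_cons_of_mem A (Abar.getElem_mem (by omega))) (outputs_vars_mem ht0)
        by_cases hjB : j < Bbar.length
        · rw [List.getElem_append_left hjB] at hsmem
          exact hdisj' w hwqA (Or.inr
            (mem_queryVars_of_mem (Bbar.getElem_mem hjB) (inputs_vars_mem ⟨s, hsmem, hc⟩)))
        · have hjB' : Bbar.length ≤ j := by omega
          rw [List.getElem_append_right hjB'] at hsmem
          have hic : i - Bbar.length + 1 < (A :: Abar).length := by simp; omega
          have := hqsm (i - Bbar.length + 1) hic
          have hmem2 : w ∈ varsOf ((A :: Abar).get ⟨i - Bbar.length + 1, hic⟩).outputs ∩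
              varsOf ((((A :: Abar).take (i - Bbar.length + 1 + 1)).map Atom.inputs).flatten) := by
            constructor
            · show w ∈ varsOf Abar[i - Bbar.length].outputs
              exact ⟨Term.var w, ht0, .var w⟩
            · refine ⟨s, ?_, hc⟩
              refine (mem_take_flatten_map_iff Atom.inputs (A :: Abar) _ s).2
                ⟨j - Bbar.length + 1, by simp; omega, by omega, ?_⟩
              show s ∈ Abar[j - Bbar.length].inputs
              exact hsmem
          rw [this] at hmem2
          exact hmem2
    · -- the side condition for hkey
      by_cases hjB : j < Bbar.length
      · rw [List.getElem_append_left hjB] at hsmem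
        refine Or.inl ?_
        intro y hy hyt
        exact hdisj' y
          (mem_queryVars_of_mem (List.mem_cons_self) (outputs_vars_mem hyt))
          (Or.inr (mem_queryVars_of_mem (Bbar.getElem_mem hjB)
            (inputs_vars_mem ⟨s, hsmem, hy⟩)))
      · refine Or.inr ?_
        intro hwv
        have hiB' : Bbar.length ≤ i := by omega
        rw [List.getElem_append_right hiB'] at ht0
        have hwqA : w ∈ queryVars (A :: Abar) :=
          mem_queryVars_of_mem
            (List.mem_cons_of_mem A (Abar.getElem_mem (by omega))) (outputs_vars_mem ht0)
        exact hdisj' w hwqA (Or.inl (Or.inr hwv))
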